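/- Let A(z) = (1−z²)^{−2} for z in the open unit disc 𝔻. For each real α > 0, the function f_α(z) = (1−z²)^{1/2} ( 1 − α^{−1} log((1+z)/(1−z)) ) (principal branches) is a non-trivial solution of f'' + A f = 0 whose unique zero in 𝔻 is z(α) = (e^α − 1)/(e^α + 1). Moreover, for every ε > 0 there exist 0 < α₁ < α₂ < ∞ such that 0 < ϱ_h(z(α₁), z(α₂)) < ε, where f_{α₁} and f_{α₂} are linearly independent solutions; in particular, the separation constant between zero-sequences of two linearly independent solutions cannot be chosen independently of the solutions. -/

import Mathlib

open Complex Metric Filter Topology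

/-- Pseudo-hyperbolic distance in the unit disc. -/
noncomputable def pseudoHypDist (z w : ℂ) : ℝ :=
  ‖(z - w) / (1 - (starRingEnd ℂ) z * w)‖

/-- Hyperbolic distance in the unit disc. -/
noncomputable def hypDist (z w : ℂ) : ℝ :=
  (1 / 2) * Real.log ((1 + pseudoHypDist z w) / (1 - pseudoHypDist z w))

/-- The coefficient `A(z) = (1−z²)^{−2}`. -/
noncomputable def A18 (z : ℂ) : ℂ := ((1 - z ^ 2) ^ 2)⁻¹

/-- The solution `f_α(z) = (1−z²)^{1/2}(1 − α⁻¹ log((1+z)/(1−z)))` (principal branches). -/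
noncomputable def f18 (α : ℝ) (z : ℂ) : ℂ :=
  (1 - z ^ 2) ^ ((1 : ℂ) / 2) * (1 - (α : ℂ)⁻¹ * Complex.log ((1 + z) / (1 - z)))

/-- The zero `z(α) = (e^α − 1)/(e^α + 1)`. -/
noncomputable def z18 (α : ℝ) : ℂ :=
  (((Real.exp α - 1) / (Real.exp α + 1) : ℝ) : ℂ)

namespace S18

lemma habs {z : ℂ} (hz : z ∈ ball (0:ℂ) 1) : ‖z‖ < 1 := by
  simpa [mem_ball, Complex.dist_eq] using hz

lemma h_one_sub {z : ℂ} (hz : z ∈ ball (0:ℂ) 1) : (1:ℂ) - z ≠ 0 := by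
  intro h
  have hz1 : z = 1 := by linear_combination -h
  have := habs hz
  rw [hz1] at this
  simp at this

lemma h_one_add {z : ℂ} (hz : z ∈ ball (0:ℂ) 1) : (1:ℂ) + z ≠ 0 := by
  intro h
  have hz1 : z = -1 := by linear_combination h
  have := habs hz
  rw [hz1] at this
  simp at this

lemma hw_re {z : ℂ} (hz : z ∈ ball (0:ℂ) 1) : 0 < (1 - z^2).re := by
  have h1 : (z^2).re ≤ ‖z^2‖ := Complex.re_le_norm _
  have h2 : ‖z^2‖ = ‖z‖^2 := by simp [norm_pow]
  have h3 := habs hz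
  have h0 : (0:ℝ) ≤ ‖z‖ := norm_nonneg z
  simp only [Complex.sub_re, Complex.one_re]
  nlinarith

lemma hw_slit {z : ℂ} (hz : z ∈ ball (0:ℂ) 1) : (1 - z^2) ∈ Complex.slitPlane :=
  Complex.mem_slitPlane_iff.2 (Or.inl (hw_re hz))

lemma hw_ne {z : ℂ} (hz : z ∈ ball (0:ℂ) 1) : (1:ℂ) - z^2 ≠ 0 :=
  Complex.slitPlane_ne_zero (hw_slit hz)

lemma hq_re {z : ℂ} (hz : z ∈ ball (0:ℂ) 1) : 0 < ((1 + z)/(1 - z)).re := by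
  have hns : 0 < Complex.normSq (1 - z) := by
    rw [Complex.normSq_pos]; exact h_one_sub hz
  have hz2 : Complex.normSq z < 1 := by
    have := habs hz
    have : ‖z‖ ^ 2 < 1 := by nlinarith [norm_nonneg z]
    rwa [Complex.sq_norm] at this
  rw [Complex.div_re]
  have h1 : (1 + z).re = 1 + z.re := by simp
  have h2 : (1 + z).im = z.im := by simp
  have h3 : (1 - z).re = 1 - z.re := by simp
  have h4 : (1 - z).im = -z.im := by simp
  rw [h1, h2, h3, h4]
  rw [Complex.normSq_apply] at hz2
  rw [← add_div, lt_div_iff₀ hns]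
  nlinarith

lemma hq_slit {z : ℂ} (hz : z ∈ ball (0:ℂ) 1) : (1 + z)/(1 - z) ∈ Complex.slitPlane :=
  Complex.mem_slitPlane_iff.2 (Or.inl (hq_re hz))

lemma hq_ne {z : ℂ} (hz : z ∈ ball (0:ℂ) 1) : (1 + z)/(1 - z) ≠ 0 :=
  Complex.slitPlane_ne_zero (hq_slit hz)

lemma hasDerivAt_w {z : ℂ} : HasDerivAt (fun z : ℂ => 1 - z^2) (-(2*z)) z := by
  simpa using (hasDerivAt_pow 2 z).const_sub 1

lemma hasDerivAt_cpow (c : ℂ) {z : ℂ} (hz : z ∈ ball (0:ℂ) 1) :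
    HasDerivAt (fun z : ℂ => (1 - z^2) ^ c) (c * (1 - z^2)^(c-1) * (-(2*z))) z :=
  hasDerivAt_w.cpow_const (hw_slit hz)

lemma hasDerivAt_L {z : ℂ} (hz : z ∈ ball (0:ℂ) 1) :
    HasDerivAt (fun z : ℂ => Complex.log ((1 + z)/(1 - z))) (2/(1 - z^2)) z := by
  have h1 : HasDerivAt (fun z : ℂ => 1 + z) 1 z := by simpa using (hasDerivAt_id z).const_add 1
  have h2 : HasDerivAt (fun z : ℂ => 1 - z) (-1) z := by simpa using (hasDerivAt_id z).const_sub 1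
  have hdiv := h1.div h2 (h_one_sub hz)
  have hlog := hdiv.clog (hq_slit hz)
  convert hlog using 1
  · funext t; rfl
  simp only [Pi.div_apply]
  have ha := h_one_add hz
  have hs := h_one_sub hz
  have hw := hw_ne hz
  field_simp
  ring

/-- derivative of the bracket `1 - α⁻¹ L` -/
lemma hasDerivAt_M (α : ℝ) {z : ℂ} (hz : z ∈ ball (0:ℂ) 1) :
    HasDerivAt (fun z : ℂ => 1 - (α : ℂ)⁻¹ * Complex.log ((1 + z) / (1 - z)))
      (-((α : ℂ)⁻¹ * (2/(1 - z^2)))) z := by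
  simpa using (((hasDerivAt_L hz).const_mul ((α : ℂ)⁻¹)).const_sub 1)

noncomputable def D1 (α : ℝ) (z : ℂ) : ℂ :=
  ((1:ℂ)/2 * (1 - z^2) ^ ((1:ℂ)/2 - 1) * (-(2*z))) *
      (1 - (α : ℂ)⁻¹ * Complex.log ((1 + z) / (1 - z)))
  + (1 - z^2) ^ ((1:ℂ)/2) * (-((α : ℂ)⁻¹ * (2/(1 - z^2))))

lemma hasDerivAt_f18 (α : ℝ) {z : ℂ} (hz : z ∈ ball (0:ℂ) 1) :
    HasDerivAt (f18 α) (D1 α z) z := by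
  have hg := hasDerivAt_cpow ((1:ℂ)/2) hz
  have hM := hasDerivAt_M α hz
  exact hg.mul hM

lemma hasDerivAt_D1 (α : ℝ) {z : ℂ} (hz : z ∈ ball (0:ℂ) 1) :
    HasDerivAt (D1 α)
      (((((1:ℂ)/2) * (((1:ℂ)/2 - 1) * (1 - z^2)^((1:ℂ)/2 - 1 - 1) * (-(2*z)))) * (-(2*z))
          + ((1:ℂ)/2 * (1 - z^2) ^ ((1:ℂ)/2 - 1)) * (-2)) *
          (1 - (α : ℂ)⁻¹ * Complex.log ((1 + z) / (1 - z)))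
        + ((1:ℂ)/2 * (1 - z^2) ^ ((1:ℂ)/2 - 1) * (-(2*z))) * (-((α : ℂ)⁻¹ * (2/(1 - z^2))))
        + ((((1:ℂ)/2) * (1 - z^2)^((1:ℂ)/2 - 1) * (-(2*z))) * (-((α : ℂ)⁻¹ * (2/(1 - z^2))))
          + (1 - z^2) ^ ((1:ℂ)/2) *
            (-((α : ℂ)⁻¹ * ((0 * (1 - z^2) - 2 * (-(2*z)))/(1 - z^2)^2))))) z := by
  have hP : HasDerivAt (fun z : ℂ => (1:ℂ)/2 * (1 - z^2) ^ ((1:ℂ)/2 - 1))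
      (((1:ℂ)/2) * (((1:ℂ)/2 - 1) * (1 - z^2)^((1:ℂ)/2 - 1 - 1) * (-(2*z)))) z :=
    (hasDerivAt_cpow ((1:ℂ)/2 - 1) hz).const_mul _
  have hz2 : HasDerivAt (fun z : ℂ => -(2*z)) (-2) z := by
    have := ((hasDerivAt_id z).const_mul (2:ℂ)).neg
    simp only [id, mul_one] at this
    exact this
  have hP0 := hP.mul hz2
  have hM := hasDerivAt_M α hz
  have hT1 := hP0.mul hM
  have hR := hasDerivAt_cpow ((1:ℂ)/2) hz
  have hSdiv : HasDerivAt (fun z : ℂ => (2:ℂ)/(1 - z^2))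
      ((0 * (1 - z^2) - 2 * (-(2*z)))/(1 - z^2)^2) z :=
    (hasDerivAt_const z (2:ℂ)).div hasDerivAt_w (hw_ne hz)
  have hS : HasDerivAt (fun z : ℂ => -((α : ℂ)⁻¹ * ((2:ℂ)/(1 - z^2))))
      (-((α : ℂ)⁻¹ * ((0 * (1 - z^2) - 2 * (-(2*z)))/(1 - z^2)^2))) z :=
    (hSdiv.const_mul _).neg
  have hT2 := hR.mul hS
  have := hT1.add hT2
  exact this

lemma ode (α : ℝ) {z : ℂ} (hz : z ∈ ball (0:ℂ) 1) :
    deriv (deriv (f18 α)) z + A18 z * f18 α z = 0 := by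
  have hball : ball (0:ℂ) 1 ∈ 𝓝 z := (isOpen_ball).mem_nhds hz
  have hev : deriv (f18 α) =ᶠ[𝓝 z] D1 α := by
    filter_upwards [hball] with w hw
    exact (hasDerivAt_f18 α hw).deriv
  have h2 : deriv (deriv (f18 α)) z = deriv (D1 α) z := hev.deriv_eq
  rw [h2, (hasDerivAt_D1 α hz).deriv]
  -- now algebra
  set u := (1 - z^2)^((1:ℂ)/2 - 1 - 1) with hu
  have hw := hw_ne hz
  have e1 : (1 - z^2)^((1:ℂ)/2 - 1) = u * (1 - z^2) := by
    have h : ((1:ℂ)/2 - 1) = ((1:ℂ)/2 - 1 - 1) + 1 := by ring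
    rw [hu, h, Complex.cpow_add _ _ hw, Complex.cpow_one]
    norm_num
  have e2 : (1 - z^2)^((1:ℂ)/2) = u * (1 - z^2) * (1 - z^2) := by
    have h : ((1:ℂ)/2) = (((1:ℂ)/2 - 1 - 1) + 1) + 1 := by ring
    rw [hu, h, Complex.cpow_add _ _ hw, Complex.cpow_add _ _ hw, Complex.cpow_one]
    norm_num
  rw [f18, A18, e1, e2]
  generalize (α:ℂ)⁻¹ = a
  generalize Complex.log ((1 + z)/(1 - z)) = L
  field_simp
  ring


lemma z18_mem (α : ℝ) (hα : 0 < α) : z18 α ∈ ball (0:ℂ) 1 := by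
  have hE : 1 < Real.exp α := by simpa using Real.exp_lt_exp.2 hα
  have h1 : (0:ℝ) < Real.exp α + 1 := by linarith
  have hx0 : 0 ≤ (Real.exp α - 1) / (Real.exp α + 1) := div_nonneg (by linarith) (by linarith)
  have hx1 : (Real.exp α - 1) / (Real.exp α + 1) < 1 := by
    rw [div_lt_one h1]; linarith
  simp only [z18, mem_ball, Complex.dist_eq, sub_zero, Complex.norm_real, Real.norm_eq_abs]
  rw [_root_.abs_of_nonneg hx0]; exact hx1

lemma f18_at_zero (α : ℝ) : f18 α 0 = 1 := by
  simp [f18, Complex.log_one]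

lemma f18_zero_iff (α : ℝ) (hα : 0 < α) {z : ℂ} (hz : z ∈ ball (0:ℂ) 1) :
    f18 α z = 0 ↔ z = z18 α := by
  have hw := hw_ne hz
  have hs := h_one_sub hz
  have ha := h_one_add hz
  have hαC : (α : ℂ) ≠ 0 := by exact_mod_cast hα.ne'
  have hE : 1 < Real.exp α := by simpa using Real.exp_lt_exp.2 hα
  have hE1 : (Real.exp α : ℝ) + 1 ≠ 0 := by linarith
  have hE1C : (Real.exp α : ℂ) + 1 ≠ 0 := by
    exact_mod_cast fun h => hE1 (by exact_mod_cast h)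
  have hcne : (1 - z^2 : ℂ) ^ ((1:ℂ)/2) ≠ 0 := by
    intro h
    rcases (Complex.cpow_eq_zero_iff _ _).1 h with ⟨h1, _⟩
    exact hw h1
  rw [f18, mul_eq_zero]
  constructor
  · rintro (h | h)
    · exact absurd h hcne
    · -- 1 - α⁻¹ L = 0
      have hL : Complex.log ((1 + z)/(1 - z)) = (α : ℂ) := by
        have h' : (α : ℂ)⁻¹ * Complex.log ((1 + z)/(1 - z)) = 1 := by
          linear_combination -h
        exact ((inv_mul_eq_one₀ hαC).1 h').symm
      have hexp : (1 + z)/(1 - z) = (Real.exp α : ℂ) := by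
        rw [← Complex.exp_log (hq_ne hz), hL, ← Complex.ofReal_exp]
      have h2 : 1 + z = (Real.exp α : ℂ) * (1 - z) := by
        rw [← hexp]; field_simp
      rw [z18, Complex.ofReal_div, Complex.ofReal_sub, Complex.ofReal_add,
        Complex.ofReal_one, eq_div_iff hE1C]
      linear_combination h2
  · intro h
    right
    have hxs : (1:ℝ) - (Real.exp α - 1)/(Real.exp α + 1) ≠ 0 := by
      rw [sub_ne_zero]
      intro hh
      rw [eq_comm, div_eq_one_iff_eq hE1] at hh
      linarith
    have hq : (1 + z)/(1 - z) = (Real.exp α : ℂ) := by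
      rw [h, z18]
      rw [show ((1:ℂ) + ((Real.exp α - 1)/(Real.exp α + 1) : ℝ)) = (((1 + (Real.exp α - 1)/(Real.exp α + 1)) : ℝ) : ℂ) by push_cast; ring,
        show ((1:ℂ) - ((Real.exp α - 1)/(Real.exp α + 1) : ℝ)) = (((1 - (Real.exp α - 1)/(Real.exp α + 1)) : ℝ) : ℂ) by push_cast; ring,
        ← Complex.ofReal_div]
      norm_cast
      field_simp
      ring
    rw [hq, ← Complex.ofReal_log (Real.exp_pos α).le, Real.log_exp]
    field_simp
    ring

lemma z18_strictMono : StrictMonoOn (fun α => (Real.exp α - 1)/(Real.exp α + 1)) (Set.Ioi 0) := by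
  intro a _ b _ hab
  have hEa : 0 < Real.exp a := Real.exp_pos a
  have hEb : 0 < Real.exp b := Real.exp_pos b
  have h : Real.exp a < Real.exp b := Real.exp_lt_exp.2 hab
  rw [div_lt_div_iff₀ (by linarith) (by linarith)]
  nlinarith

lemma hypDist_eq (α₁ α₂ : ℝ) (h1 : 0 < α₁) (h12 : α₁ < α₂) :
    hypDist (z18 α₁) (z18 α₂) = (α₂ - α₁) / 2 := by
  set E₁ := Real.exp α₁ with hE₁
  set E₂ := Real.exp α₂ with hE₂
  have hE1p : 0 < E₁ := Real.exp_pos _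
  have hE2p : 0 < E₂ := Real.exp_pos _
  have hElt : E₁ < E₂ := Real.exp_lt_exp.2 h12
  have h1E : 1 < E₁ := by rw [hE₁]; simpa using Real.exp_lt_exp.2 h1
  set x := (E₁ - 1)/(E₁ + 1) with hx
  set y := (E₂ - 1)/(E₂ + 1) with hy
  have hd1 : (0:ℝ) < E₁ + 1 := by linarith
  have hd2 : (0:ℝ) < E₂ + 1 := by linarith
  have hx0 : 0 ≤ x := div_nonneg (by linarith) (by linarith)
  have hx1 : x < 1 := by rw [hx, div_lt_one hd1]; linarith
  have hy0 : 0 ≤ y := div_nonneg (by linarith) (by linarith)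
  have hy1 : y < 1 := by rw [hy, div_lt_one hd2]; linarith
  have hxy : 0 < 1 - x*y := by nlinarith
  -- pseudo-hyperbolic distance
  have hpseudo : pseudoHypDist (z18 α₁) (z18 α₂) = (E₂ - E₁)/(E₁ + E₂) := by
    have : pseudoHypDist (z18 α₁) (z18 α₂) = |(x - y)/(1 - x*y)| := by
      rw [pseudoHypDist, z18, z18, ← hE₁, ← hE₂, ← hx, ← hy, Complex.conj_ofReal]
      rw [show ((x:ℂ) - (y:ℝ))/(1 - (x:ℝ)*(y:ℝ)) = (((x - y)/(1 - x*y) : ℝ) : ℂ) by push_cast; ring]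
      exact (Complex.norm_real _).trans (Real.norm_eq_abs _)
    rw [this]
    have hval : (x - y)/(1 - x*y) = (E₁ - E₂)/(E₁ + E₂) := by
      rw [div_eq_div_iff hxy.ne' (by linarith : (0:ℝ) < E₁ + E₂).ne', hx, hy]
      field_simp
      ring
    rw [hval, abs_div, abs_of_pos (by linarith : (0:ℝ) < E₁ + E₂), abs_of_neg (by linarith : E₁ - E₂ < 0)]
    ring
  rw [hypDist, hpseudo]
  have key : (1 + (E₂ - E₁)/(E₁ + E₂)) / (1 - (E₂ - E₁)/(E₁ + E₂)) = E₂/E₁ := by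
    rw [div_eq_div_iff]
    · field_simp; ring
    · have : (0:ℝ) < 1 - (E₂ - E₁)/(E₁ + E₂) := by
        rw [sub_pos, div_lt_one (by linarith)]; linarith
      linarith [this]
    · exact hE1p.ne'
  rw [key, Real.log_div hE2p.ne' hE1p.ne', hE₁, hE₂, Real.log_exp, Real.log_exp]
  ring

end S18

/-- For each `α > 0`, `f_α` is a non-trivial analytic solution of
`f'' + A f = 0` with `A(z) = (1−z²)^{−2}` whose unique zero in `𝔻` is
`z(α) = (e^α−1)/(e^α+1)`. Moreover, for every `ε > 0` there are `0 < α₁ < α₂` such that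
`0 < ϱ_h(z(α₁), z(α₂)) < ε` while `f_{α₁}` and `f_{α₂}` are linearly independent. -/
theorem stmt_18 :
    (∀ α : ℝ, 0 < α →
      AnalyticOnNhd ℂ (f18 α) (ball (0:ℂ) 1) ∧
      (∀ z ∈ ball (0:ℂ) 1, deriv (deriv (f18 α)) z + A18 z * f18 α z = 0) ∧
      ¬ (∀ z ∈ ball (0:ℂ) 1, f18 α z = 0) ∧
      z18 α ∈ ball (0:ℂ) 1 ∧
      (∀ z ∈ ball (0:ℂ) 1, (f18 α z = 0 ↔ z = z18 α))) ∧
    (∀ ε : ℝ, 0 < ε → ∃ α₁ α₂ : ℝ, 0 < α₁ ∧ α₁ < α₂ ∧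
      0 < hypDist (z18 α₁) (z18 α₂) ∧ hypDist (z18 α₁) (z18 α₂) < ε ∧
      (∀ a b : ℂ, (∀ z ∈ ball (0:ℂ) 1, a * f18 α₁ z + b * f18 α₂ z = 0) →
        a = 0 ∧ b = 0)) := by
  constructor
  · intro α hα
    refine ⟨?_, fun z hz => S18.ode α hz, ?_, S18.z18_mem α hα,
      fun z hz => S18.f18_zero_iff α hα hz⟩
    · have hdiff : DifferentiableOn ℂ (f18 α) (ball (0:ℂ) 1) := fun z hz =>
        (S18.hasDerivAt_f18 α hz).differentiableAt.differentiableWithinAt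
      exact hdiff.analyticOnNhd isOpen_ball
    · intro h
      have h0 : (0:ℂ) ∈ ball (0:ℂ) 1 := mem_ball_self one_pos
      have := h 0 h0
      rw [S18.f18_at_zero] at this
      exact one_ne_zero this
  · intro ε hε
    refine ⟨1, 1 + ε, one_pos, by linarith, ?_, ?_, ?_⟩
    · rw [S18.hypDist_eq 1 (1 + ε) one_pos (by linarith)]
      linarith
    · rw [S18.hypDist_eq 1 (1 + ε) one_pos (by linarith)]
      linarith
    · intro a b hab
      have h0 : (0:ℂ) ∈ ball (0:ℂ) 1 := mem_ball_self one_pos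
      have hz1mem : z18 1 ∈ ball (0:ℂ) 1 := S18.z18_mem 1 one_pos
      have hsum : a + b = 0 := by
        have := hab 0 h0
        rwa [S18.f18_at_zero, S18.f18_at_zero, mul_one, mul_one] at this
      have hf1 : f18 1 (z18 1) = 0 := (S18.f18_zero_iff 1 one_pos hz1mem).2 rfl
      have hne : z18 1 ≠ z18 (1 + ε) := by
        intro h
        have hmono := S18.z18_strictMono (Set.mem_Ioi.2 one_pos)
          (Set.mem_Ioi.2 (by linarith : (0:ℝ) < 1 + ε)) (by linarith : (1:ℝ) < 1 + ε)
        rw [z18, z18, Complex.ofReal_inj] at h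
        simp only at hmono
        linarith [hmono]
      have hf2 : f18 (1 + ε) (z18 1) ≠ 0 := by
        intro h
        exact hne ((S18.f18_zero_iff (1 + ε) (by linarith) hz1mem).1 h)
      have hb : b = 0 := by
        have := hab (z18 1) hz1mem
        rw [hf1, mul_zero, zero_add] at this
        exact (mul_eq_zero.1 this).resolve_right hf2
      refine ⟨?_, hb⟩
      rw [hb, add_zero] at hsum
      exact hsum
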